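/- Let k ≥ 4. The number of natural numbers N such that N and N + 2 both lie in [5, 4 + ∏_{i=1}^{k−1} P_i], both N and N + 2 are coprime to ∏_{i=1}^{k−1} P_i, and P_k divides N or N + 2, is at most 2·∏_{i=2}^{k−2} (P_i − 2). -/

import Mathlib

/-- `P i` is the `i`-th prime number (1-indexed): `P 1 = 2`, `P 2 = 3`, `P 3 = 5`, ... -/
noncomputable def P (i : ℕ) : ℕ := Nat.nth Nat.Prime (i - 1)

/-- The `k`-th primorial, `∏_{i=1}^{k} P_i`. -/
noncomputable def primor (k : ℕ) : ℕ := ∏ i ∈ Finset.Icc 1 k, P i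

lemma P_prime (i : ℕ) : (P i).Prime := Nat.prime_nth_prime _

lemma P_lt_P {i j : ℕ} (hi : 1 ≤ i) (h : i < j) : P i < P j := by
  unfold P
  exact (Nat.nth_lt_nth Nat.infinite_setOf_prime).2 (by omega)

lemma P_one : P 1 = 2 := by
  have hc : Nat.count Nat.Prime 2 = 0 := by decide
  have h := Nat.nth_count (p := Nat.Prime) (n := 2) Nat.prime_two
  rw [hc] at h
  simpa [P] using h

lemma P_ge_three {i : ℕ} (h : 2 ≤ i) : 3 ≤ P i := by
  have := P_lt_P (i := 1) (j := i) le_rfl (by omega)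
  rw [P_one] at this; omega

lemma primor_succ (k : ℕ) : primor (k+1) = primor k * P (k+1) :=
  Finset.prod_Icc_succ_top (by omega) _

lemma primor_pos (k : ℕ) : 0 < primor k :=
  Finset.prod_pos (fun i _ => (P_prime i).pos)

lemma coprime_primor {k j : ℕ} (h : k < j) : Nat.Coprime (primor k) (P j) := by
  apply Nat.Coprime.prod_left
  intro i hi
  rw [Finset.mem_Icc] at hi
  exact (Nat.coprime_primes (P_prime i) (P_prime j)).2
    (Nat.ne_of_lt (P_lt_P hi.1 (lt_of_le_of_lt hi.2 h)))

lemma isUnit_prod_iff' {M N : Type*} [Monoid M] [Monoid N] {x : M × N} :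
    IsUnit x ↔ IsUnit x.1 ∧ IsUnit x.2 := by
  constructor
  · rintro ⟨u, rfl⟩
    exact ⟨(Units.map (MonoidHom.fst M N) u).isUnit, (Units.map (MonoidHom.snd M N) u).isUnit⟩
  · rintro ⟨h1, h2⟩
    exact ⟨MulEquiv.prodUnits.symm (h1.unit, h2.unit), by simp [MulEquiv.prodUnits]⟩

lemma card_twin_mul (a b : ℕ) (h : Nat.Coprime a b) :
    Nat.card {x : ZMod (a*b) // IsUnit x ∧ IsUnit (x+2)} =
    Nat.card {x : ZMod a // IsUnit x ∧ IsUnit (x+2)} *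
      Nat.card {x : ZMod b // IsUnit x ∧ IsUnit (x+2)} := by
  let e := ZMod.chineseRemainder h
  have hu : ∀ y : ZMod (a*b), IsUnit (e y) ↔ IsUnit y := fun y =>
    ⟨fun hy => by simpa using hy.map e.symm.toRingHom, fun hy => hy.map e.toRingHom⟩
  have e1 : ∀ x : ZMod (a*b), (IsUnit x ∧ IsUnit (x+2)) ↔
      ((IsUnit (e x).1 ∧ IsUnit ((e x).1 + 2)) ∧ (IsUnit (e x).2 ∧ IsUnit ((e x).2 + 2))) := by
    intro x
    have h2 : e (x + 2) = e x + 2 := by rw [map_add, map_ofNat]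
    rw [← hu x, ← hu (x+2), h2, isUnit_prod_iff', isUnit_prod_iff']
    have f1 : (e x + 2).1 = (e x).1 + 2 := rfl
    have f2 : (e x + 2).2 = (e x).2 + 2 := rfl
    rw [f1, f2]
    tauto
  calc Nat.card {x : ZMod (a*b) // IsUnit x ∧ IsUnit (x+2)}
      = Nat.card {y : ZMod a × ZMod b //
          (IsUnit y.1 ∧ IsUnit (y.1+2)) ∧ (IsUnit y.2 ∧ IsUnit (y.2+2))} :=
        Nat.card_congr (e.toEquiv.subtypeEquiv e1)
    _ = Nat.card ({x : ZMod a // IsUnit x ∧ IsUnit (x+2)} ×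
          {x : ZMod b // IsUnit x ∧ IsUnit (x+2)}) :=
        Nat.card_congr (Equiv.subtypeProdEquivProd
          (p := fun x : ZMod a => IsUnit x ∧ IsUnit (x+2))
          (q := fun x : ZMod b => IsUnit x ∧ IsUnit (x+2)))
    _ = _ := Nat.card_prod _ _

lemma card_twin_prime {p : ℕ} (hp : p.Prime) (h3 : 3 ≤ p) :
    Nat.card {x : ZMod p // IsUnit x ∧ IsUnit (x+2)} = p - 2 := by
  haveI : Fact p.Prime := ⟨hp⟩
  classical
  have h20 : (2 : ZMod p) ≠ 0 := by
    intro h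
    have hd : (p : ℕ) ∣ 2 := by
      exact_mod_cast (ZMod.natCast_eq_zero_iff 2 p).1 (by exact_mod_cast h)
    have := Nat.le_of_dvd (by norm_num) hd
    omega
  have key : Finset.univ.filter (fun x : ZMod p => IsUnit x ∧ IsUnit (x+2))
      = Finset.univ \ {0, -2} := by
    ext x
    simp only [Finset.mem_filter, Finset.mem_univ, true_and, Finset.mem_sdiff,
      Finset.mem_insert, Finset.mem_singleton, isUnit_iff_ne_zero]
    constructor
    · rintro ⟨hx, hx2⟩ (h | h)
      · exact hx h
      · exact hx2 (by rw [h]; ring)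
    · intro hx
      exact ⟨fun h => hx (Or.inl h), fun h2 => hx (Or.inr (eq_neg_iff_add_eq_zero.mpr h2))⟩
  rw [Nat.card_eq_fintype_card, Fintype.card_subtype, key,
    Finset.card_sdiff_of_subset (by simp), Finset.card_univ, ZMod.card]
  have hc : ({0, -2} : Finset (ZMod p)).card = 2 := by
    rw [Finset.card_insert_of_notMem, Finset.card_singleton]
    simp only [Finset.mem_singleton]
    intro h
    exact h20 (neg_eq_zero.mp h.symm)
  rw [hc]

lemma card_twin_two : Nat.card {x : ZMod 2 // IsUnit x ∧ IsUnit (x+2)} = 1 := by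
  have hiff : ∀ x : ZMod 2, (IsUnit x ∧ IsUnit (x+2)) ↔ x = 1 := by
    intro x
    constructor
    · rintro ⟨hx, -⟩
      have h01 : x = 0 ∨ x = 1 := by revert x; decide
      rcases h01 with rfl | rfl
      · exact absurd (isUnit_zero_iff.mp hx) (by decide)
      · rfl
    · rintro rfl
      refine ⟨isUnit_one, ?_⟩
      have h12 : (1 + 2 : ZMod 2) = 1 := by decide
      rw [h12]
      exact isUnit_one
  rw [Nat.card_congr (Equiv.subtypeEquivRight hiff)]
  simp [Nat.card_eq_fintype_card]

lemma count_twin : ∀ m : ℕ, 1 ≤ m →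
    Nat.card {x : ZMod (primor m) // IsUnit x ∧ IsUnit (x+2)}
      = ∏ i ∈ Finset.Icc 2 m, (P i - 2) := by
  intro m
  induction m with
  | zero => omega
  | succ n ih =>
    intro _
    rcases Nat.eq_zero_or_pos n with rfl | hn
    · have h1 : primor 1 = 2 := by
        rw [primor, Finset.Icc_self, Finset.prod_singleton, P_one]
      rw [show Finset.Icc 2 1 = ∅ from rfl, Finset.prod_empty]
      rw [h1]
      exact card_twin_two
    · have h3 : 3 ≤ P (n+1) := P_ge_three (by omega)
      rw [primor_succ, card_twin_mul _ _ (coprime_primor (by omega)), ih hn,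
        card_twin_prime (P_prime _) h3, Finset.prod_Icc_succ_top (by omega)]

open scoped Classical in
/-- For `k ≥ 4`, the number of naturals `N` with `N` and `N + 2` both
in `[5, 4 + ∏_{i=1}^{k-1} P_i]`, both coprime to `∏_{i=1}^{k-1} P_i`, and
`P_k ∣ N` or `P_k ∣ N + 2`, is at most `2·∏_{i=2}^{k-2}(P_i - 2)`. -/
theorem twin_primes_with_factor_Pk_bound (k : ℕ) (hk : 4 ≤ k) :
    ((Finset.Icc 5 (4 + primor (k - 1))).filter
      (fun N => N + 2 ∈ Finset.Icc 5 (4 + primor (k - 1)) ∧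
        Nat.Coprime N (primor (k - 1)) ∧ Nat.Coprime (N + 2) (primor (k - 1)) ∧
        (P k ∣ N ∨ P k ∣ N + 2))).card
      ≤ 2 * ∏ i ∈ Finset.Icc 2 (k - 2), (P i - 2) := by
  classical
  set M := primor (k - 1) with hM
  set M' := primor (k - 2) with hM'
  set p := P k with hp
  haveI : NeZero M' := ⟨(primor_pos _).ne'⟩
  have hMM : M = M' * P (k - 1) := by
    rw [hM, hM', show k - 1 = (k - 2) + 1 by omega]
    exact primor_succ (k - 2)
  have hcop : Nat.Coprime M' p := coprime_primor (by omega)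
  have hPlt : P (k - 1) < p := P_lt_P (by omega) (by omega)
  have hMlt : M < M' * p := by
    rw [hMM]
    exact mul_lt_mul_of_pos_left hPlt (primor_pos (k - 2))
  set U : Finset (ZMod M') := Finset.univ.filter (fun x => IsUnit x ∧ IsUnit (x+2)) with hU
  have hUcard : U.card = ∏ i ∈ Finset.Icc 2 (k - 2), (P i - 2) := by
    rw [← count_twin (k - 2) (by omega), Nat.card_eq_fintype_card, Fintype.card_subtype]
  have hMdvd : M' ∣ M := ⟨P (k - 1), hMM⟩
  -- key injection lemma
  have key : ∀ T : Finset ℕ,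
      (∀ N ∈ T, N ∈ Finset.Icc 5 (4 + M) ∧ Nat.Coprime N M ∧ Nat.Coprime (N + 2) M) →
      (∀ N ∈ T, ∀ N' ∈ T, N ≡ N' [MOD p]) → T.card ≤ U.card := by
    intro T hT hmod
    refine Finset.card_le_card_of_injOn (fun N : ℕ => (N : ZMod M')) ?_ ?_
    · intro N hN
      obtain ⟨hI, hc1, hc2⟩ := hT N hN
      rw [hU, Finset.mem_coe, Finset.mem_filter]
      refine ⟨Finset.mem_univ _, ?_, ?_⟩
      · exact (ZMod.isUnit_iff_coprime N M').2 (hc1.coprime_dvd_right hMdvd)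
      · have hcast : ((N : ZMod M') + 2) = ((N + 2 : ℕ) : ZMod M') := by push_cast; ring
        rw [hcast]
        exact (ZMod.isUnit_iff_coprime _ M').2 (hc2.coprime_dvd_right hMdvd)
    · intro N hN N' hN' heq
      simp only at heq
      have h1 : N ≡ N' [MOD M'] := (ZMod.natCast_eq_natCast_iff _ _ _).1 heq
      have h2 : N ≡ N' [MOD p] := hmod N hN N' hN'
      have h12 : N ≡ N' [MOD M' * p] :=
        (Nat.modEq_and_modEq_iff_modEq_mul hcop).1 ⟨h1, h2⟩
      obtain ⟨hI, -, -⟩ := hT N hN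
      obtain ⟨hI', -, -⟩ := hT N' hN'
      rw [Finset.mem_Icc] at hI hI'
      rcases le_total N N' with hle | hle
      · have hd := (Nat.modEq_iff_dvd' hle).1 h12
        rcases Nat.eq_zero_or_pos (N' - N) with h0 | hpos
        · omega
        · have := Nat.le_of_dvd hpos hd
          omega
      · have hd := (Nat.modEq_iff_dvd' hle).1 h12.symm
        rcases Nat.eq_zero_or_pos (N - N') with h0 | hpos
        · omega
        · have := Nat.le_of_dvd hpos hd
          omega
  set S1 : Finset ℕ := (Finset.Icc 5 (4 + M)).filter
      (fun N => Nat.Coprime N M ∧ Nat.Coprime (N + 2) M ∧ p ∣ N) with hS1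
  set S2 : Finset ℕ := (Finset.Icc 5 (4 + M)).filter
      (fun N => Nat.Coprime N M ∧ Nat.Coprime (N + 2) M ∧ p ∣ N + 2) with hS2
  have hsub : ((Finset.Icc 5 (4 + M)).filter
      (fun N => N + 2 ∈ Finset.Icc 5 (4 + M) ∧
        Nat.Coprime N M ∧ Nat.Coprime (N + 2) M ∧ (p ∣ N ∨ p ∣ N + 2))) ⊆ S1 ∪ S2 := by
    intro N hN
    rw [Finset.mem_filter] at hN
    rw [Finset.mem_union, hS1, hS2, Finset.mem_filter, Finset.mem_filter]
    tauto
  have hc1 : S1.card ≤ U.card := by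
    apply key
    · intro N hN
      rw [hS1, Finset.mem_filter] at hN
      exact ⟨hN.1, hN.2.1, hN.2.2.1⟩
    · intro N hN N' hN'
      rw [hS1, Finset.mem_filter] at hN hN'
      exact (Nat.modEq_zero_iff_dvd.2 hN.2.2.2).trans (Nat.modEq_zero_iff_dvd.2 hN'.2.2.2).symm
  have hc2 : S2.card ≤ U.card := by
    apply key
    · intro N hN
      rw [hS2, Finset.mem_filter] at hN
      exact ⟨hN.1, hN.2.1, hN.2.2.1⟩
    · intro N hN N' hN'
      rw [hS2, Finset.mem_filter] at hN hN'
      have : N + 2 ≡ N' + 2 [MOD p] :=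
        (Nat.modEq_zero_iff_dvd.2 hN.2.2.2).trans (Nat.modEq_zero_iff_dvd.2 hN'.2.2.2).symm
      exact Nat.ModEq.add_right_cancel' 2 this
  calc ((Finset.Icc 5 (4 + M)).filter _).card
      ≤ (S1 ∪ S2).card := Finset.card_le_card hsub
    _ ≤ S1.card + S2.card := Finset.card_union_le _ _
    _ ≤ U.card + U.card := Nat.add_le_add hc1 hc2
    _ = 2 * U.card := by ring
    _ = 2 * ∏ i ∈ Finset.Icc 2 (k - 2), (P i - 2) := by rw [hUcard]
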